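/- Let t ≥ 2, ℓ ≥ 1 and s ≥ 0 be integers, and set α = ([∏_{j=0}^{ℓ−1} ∏_{i=1}^{s} (t+i+j)] · [∏_{i=0}^{ℓ−2} (t+i)] · [∏_{i=1}^{s} i!]) / ((ℓ−1)! · ∏_{i=ℓ+1}^{s+ℓ} i!) ∈ ℚ. Then α · [∏_{i=1}^{ℓ} (s+i)!] · [∏_{i=s+1}^{ℓ−1} (t+i)^{ℓ}] = ℓ · [∏_{i=1}^{ℓ−1} i!] · (t+ℓ−1)^{ℓ−1} · [∏_{i=0}^{ℓ−2} (t+i)^{i+1}·(t+s+1+i)^{ℓ−1−i}] · [∏_{i=ℓ}^{s} (t+i)^{ℓ}]. -/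

import Mathlib

open Finset in
private lemma stmt13_shift_prod (f c : ℕ → ℕ) (a k N : ℕ) (h : a + k ≤ N) :
    ∏ i ∈ range k, f (a + i) ^ c i =
    ∏ m ∈ range N, f m ^ (if a ≤ m ∧ m < a + k then c (m - a) else 0) := by
  have h1 : ∀ m ∈ range N, f m ^ (if a ≤ m ∧ m < a + k then c (m - a) else 0)
      = if a ≤ m ∧ m < a + k then f m ^ c (m - a) else 1 := by
    intro m _; split <;> simp
  rw [Finset.prod_congr rfl h1, ← Finset.prod_filter]
  have h2 : Finset.filter (fun m => a ≤ m ∧ m < a + k) (range N) = (range k).image (a + ·) := by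
    ext m
    simp only [Finset.mem_filter, Finset.mem_range, Finset.mem_image]
    constructor
    · rintro ⟨h1, h2, h3⟩; exact ⟨m - a, by omega, by omega⟩
    · rintro ⟨x, hx, rfl⟩; omega
  rw [h2, Finset.prod_image (fun x _ y _ hxy => by omega)]
  apply Finset.prod_congr rfl
  intro i _
  simp

open Finset in
private lemma stmt13_count_sum (s m : ℕ) : ∀ ℓ : ℕ,
    (∑ j ∈ range ℓ, if j + 1 ≤ m ∧ m < j + 1 + s then 1 else 0) = min m ℓ - (m - s) := by
  intro ℓ; induction ℓ with
  | zero => simp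
  | succ n ih => rw [Finset.sum_range_succ, ih]; split <;> omega

open Finset in
private lemma stmt13_icc_to_range {M : Type*} [CommMonoid M] (f : ℕ → M) (a b : ℕ) :
    ∏ i ∈ Icc a b, f i = ∏ i ∈ range (b + 1 - a), f (a + i) := by
  rw [← Finset.Ico_add_one_right_eq_Icc, Finset.prod_Ico_eq_prod_range]

open Finset in
private lemma stmt13_L2 (t ℓ s : ℕ) (hℓ : 1 ≤ ℓ) :
    (∏ j ∈ range ℓ, ∏ i ∈ Icc 1 s, (t + i + j)) * (∏ i ∈ range (ℓ - 1), (t + i)) *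
      (∏ i ∈ Icc (s + 1) (ℓ - 1), (t + i) ^ ℓ) =
    (t + (ℓ - 1)) ^ (ℓ - 1) *
      (∏ i ∈ range (ℓ - 1), (t + i) ^ (i + 1) * (t + s + 1 + i) ^ (ℓ - 1 - i)) *
      (∏ i ∈ Icc ℓ s, (t + i) ^ ℓ) := by
  set N := s + ℓ with hN
  have hA : (∏ j ∈ range ℓ, ∏ i ∈ Icc 1 s, (t + i + j))
      = ∏ m ∈ range N, (t + m) ^ (∑ j ∈ range ℓ, if j + 1 ≤ m ∧ m < j + 1 + s then 1 else 0) := by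
    have step : ∀ j ∈ range ℓ, (∏ i ∈ Icc 1 s, (t + i + j))
        = ∏ m ∈ range N, (t + m) ^ (if j + 1 ≤ m ∧ m < j + 1 + s then 1 else 0) := by
      intro j hj
      rw [stmt13_icc_to_range]
      have e1 : (∏ i ∈ range (s + 1 - 1), (t + (1 + i) + j))
          = ∏ i ∈ range s, (t + ((j + 1) + i)) ^ ((fun _ => 1) i) := by
        rw [show s + 1 - 1 = s from by omega]
        exact Finset.prod_congr rfl (fun i _ => by rw [pow_one]; omega)
      rw [e1]
      have := stmt13_shift_prod (fun m => t + m) (fun _ => 1) (j + 1) s N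
        (by simp at hj; omega)
      simpa using this
    rw [Finset.prod_congr rfl step, Finset.prod_comm]
    exact Finset.prod_congr rfl (fun m _ => Finset.prod_pow_eq_pow_sum _ _ _)
  have hB : (∏ i ∈ range (ℓ - 1), (t + i))
      = ∏ m ∈ range N, (t + m) ^ (if m < ℓ - 1 then 1 else 0) := by
    have := stmt13_shift_prod (fun m => t + m) (fun _ => 1) 0 (ℓ - 1) N (by omega)
    simpa using this
  have hG : (∏ i ∈ Icc (s + 1) (ℓ - 1), (t + i) ^ ℓ)
      = ∏ m ∈ range N, (t + m) ^ (if s + 1 ≤ m ∧ m < s + 1 + (ℓ - 1 + 1 - (s + 1)) then ℓ else 0) := by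
    rw [stmt13_icc_to_range]
    have := stmt13_shift_prod (fun m => t + m) (fun _ => ℓ) (s + 1) (ℓ - 1 + 1 - (s + 1)) N (by omega)
    simpa using this
  have hH : (t + (ℓ - 1)) ^ (ℓ - 1)
      = ∏ m ∈ range N, (t + m) ^ (if ℓ - 1 ≤ m ∧ m < ℓ - 1 + 1 then ℓ - 1 else 0) := by
    have := stmt13_shift_prod (fun m => t + m) (fun _ => ℓ - 1) (ℓ - 1) 1 N (by omega)
    simpa using this
  have hQ1 : (∏ i ∈ range (ℓ - 1), (t + i) ^ (i + 1))
      = ∏ m ∈ range N, (t + m) ^ (if m < ℓ - 1 then m + 1 else 0) := by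
    have := stmt13_shift_prod (fun m => t + m) (fun i => i + 1) 0 (ℓ - 1) N (by omega)
    simpa using this
  have hQ2 : (∏ i ∈ range (ℓ - 1), (t + s + 1 + i) ^ (ℓ - 1 - i))
      = ∏ m ∈ range N, (t + m) ^ (if s + 1 ≤ m ∧ m < s + 1 + (ℓ - 1) then ℓ - 1 - (m - (s + 1)) else 0) := by
    have e1 : (∏ i ∈ range (ℓ - 1), (t + s + 1 + i) ^ (ℓ - 1 - i))
        = ∏ i ∈ range (ℓ - 1), (t + ((s + 1) + i)) ^ ((fun i => ℓ - 1 - i) i) := by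
      exact Finset.prod_congr rfl (fun i _ => by congr 1; omega)
    rw [e1]
    have := stmt13_shift_prod (fun m => t + m) (fun i => ℓ - 1 - i) (s + 1) (ℓ - 1) N (by omega)
    simpa using this
  have hR : (∏ i ∈ Icc ℓ s, (t + i) ^ ℓ)
      = ∏ m ∈ range N, (t + m) ^ (if ℓ ≤ m ∧ m < ℓ + (s + 1 - ℓ) then ℓ else 0) := by
    rw [stmt13_icc_to_range]
    have := stmt13_shift_prod (fun m => t + m) (fun _ => ℓ) ℓ (s + 1 - ℓ) N (by omega)
    simpa using this
  rw [hA, hB, hG, hH, Finset.prod_mul_distrib, hQ1, hQ2, hR,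
    ← Finset.prod_mul_distrib, ← Finset.prod_mul_distrib,
    ← Finset.prod_mul_distrib, ← Finset.prod_mul_distrib,
    ← Finset.prod_mul_distrib]
  apply Finset.prod_congr rfl
  intro m hm
  simp only [← pow_add]
  congr 1
  rw [stmt13_count_sum]
  simp only [Finset.mem_range] at hm
  split_ifs <;> omega

open Finset in
private lemma stmt13_L1 (s ℓ : ℕ) (hℓ : 1 ≤ ℓ) :
    (∏ i ∈ Icc 1 s, Nat.factorial i) * (∏ i ∈ Icc 1 ℓ, Nat.factorial (s + i))
    = (∏ i ∈ Icc 1 (ℓ - 1), Nat.factorial i) * (ℓ * Nat.factorial (ℓ - 1)) *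
      (∏ i ∈ Icc (ℓ + 1) (s + ℓ), Nat.factorial i) := by
  have key : ∀ (b c : ℕ), 0 ≤ b → b ≤ c →
      (∏ i ∈ Icc 1 b, Nat.factorial i) * ∏ i ∈ Icc (b + 1) c, Nat.factorial i
      = ∏ i ∈ Icc 1 c, Nat.factorial i := by
    intro b c h1 h2
    rw [← Finset.Ico_add_one_right_eq_Icc, ← Finset.Ico_add_one_right_eq_Icc, ← Finset.Ico_add_one_right_eq_Icc]
    exact Finset.prod_Ico_consecutive _ (by omega) (by omega)
  have h1 : (∏ i ∈ Icc 1 ℓ, Nat.factorial (s + i)) = ∏ i ∈ Icc (s + 1) (s + ℓ), Nat.factorial i := by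
    rw [stmt13_icc_to_range (fun i => Nat.factorial (s + i)),
      stmt13_icc_to_range (fun i => Nat.factorial i)]
    rw [show ℓ + 1 - 1 = ℓ from rfl, show s + ℓ + 1 - (s + 1) = ℓ from by omega]
    exact Finset.prod_congr rfl (fun i _ => by congr 1; omega)
  have h2 : ℓ * Nat.factorial (ℓ - 1) = Nat.factorial ℓ := Nat.mul_factorial_pred (by omega)
  have h3 : (∏ i ∈ Icc 1 (ℓ - 1), Nat.factorial i) * Nat.factorial ℓ
      = ∏ i ∈ Icc 1 ℓ, Nat.factorial i := by
    have := Finset.prod_Icc_succ_top (a := 1) (b := ℓ - 1) (by omega) (fun i => Nat.factorial i)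
    rw [show ℓ - 1 + 1 = ℓ from by omega] at this
    exact this.symm
  rw [h1, h2, key s (s + ℓ) (by omega) (by omega), h3, key ℓ (s + ℓ) (by omega) (by omega)]

/-- **Product evaluation of `α`.** Let `t ≥ 2`, `ℓ ≥ 1`, `s ≥ 0` and
`α = (∏_{j=0}^{ℓ−1} ∏_{i=1}^{s} (t+i+j) · ∏_{i=0}^{ℓ−2} (t+i) · ∏_{i=1}^{s} i!) /
((ℓ−1)! · ∏_{i=ℓ+1}^{s+ℓ} i!) ∈ ℚ`.  Then
`α · ∏_{i=1}^{ℓ} (s+i)! · ∏_{i=s+1}^{ℓ−1} (t+i)^ℓ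
  = ℓ · ∏_{i=1}^{ℓ−1} i! · (t+ℓ−1)^{ℓ−1} · ∏_{i=0}^{ℓ−2} (t+i)^{i+1}·(t+s+1+i)^{ℓ−1−i}
      · ∏_{i=ℓ}^{s} (t+i)^ℓ`. -/
theorem stmt_13 (t ℓ s : ℕ) (ht : 2 ≤ t) (hℓ : 1 ≤ ℓ)
    (α : ℚ)
    (hα : α = ((∏ j ∈ Finset.range ℓ, ∏ i ∈ Finset.Icc 1 s, ((t + i + j : ℕ) : ℚ)) *
        (∏ i ∈ Finset.range (ℓ - 1), ((t + i : ℕ) : ℚ)) *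
        (∏ i ∈ Finset.Icc 1 s, (Nat.factorial i : ℚ))) /
      ((Nat.factorial (ℓ - 1) : ℚ) *
        ∏ i ∈ Finset.Icc (ℓ + 1) (s + ℓ), (Nat.factorial i : ℚ))) :
    α * (∏ i ∈ Finset.Icc 1 ℓ, (Nat.factorial (s + i) : ℚ)) *
        (∏ i ∈ Finset.Icc (s + 1) (ℓ - 1), ((t + i : ℕ) : ℚ) ^ ℓ) =
      (ℓ : ℚ) * (∏ i ∈ Finset.Icc 1 (ℓ - 1), (Nat.factorial i : ℚ)) *
        ((t + ℓ - 1 : ℕ) : ℚ) ^ (ℓ - 1) *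
        (∏ i ∈ Finset.range (ℓ - 1),
          ((t + i : ℕ) : ℚ) ^ (i + 1) * ((t + s + 1 + i : ℕ) : ℚ) ^ (ℓ - 1 - i)) *
        (∏ i ∈ Finset.Icc ℓ s, ((t + i : ℕ) : ℚ) ^ ℓ) := by
  have hden : ((Nat.factorial (ℓ - 1) : ℚ) *
      ∏ i ∈ Finset.Icc (ℓ + 1) (s + ℓ), (Nat.factorial i : ℚ)) ≠ 0 := by
    apply mul_ne_zero
    · exact_mod_cast Nat.cast_ne_zero.mpr (Nat.factorial_ne_zero _)
    · exact Finset.prod_ne_zero_iff.mpr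
        (fun i _ => Nat.cast_ne_zero.mpr (Nat.factorial_ne_zero _))
  rw [hα, div_mul_eq_mul_div, div_mul_eq_mul_div, div_eq_iff hden,
    show t + ℓ - 1 = t + (ℓ - 1) from by omega]
  have l1 := congrArg (Nat.cast : ℕ → ℚ) (stmt13_L1 s ℓ hℓ)
  have l2 := congrArg (Nat.cast : ℕ → ℚ) (stmt13_L2 t ℓ s hℓ)
  push_cast at l1 l2 ⊢
  linear_combination
    ((∏ i ∈ Finset.Icc 1 s, (Nat.factorial i : ℚ)) *
      (∏ i ∈ Finset.Icc 1 ℓ, (Nat.factorial (s + i) : ℚ))) * l2 +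
    (((t : ℚ) + ((ℓ - 1 : ℕ) : ℚ)) ^ (ℓ - 1) *
      (∏ i ∈ Finset.range (ℓ - 1),
        ((t : ℚ) + i) ^ (i + 1) * ((t : ℚ) + s + 1 + i) ^ (ℓ - 1 - i)) *
      (∏ i ∈ Finset.Icc ℓ s, ((t : ℚ) + i) ^ ℓ)) * l1
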